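/- For |q|<1 and parameters μ, ν, the three-parameter q-binomial identity holds: ∑_{m=0}^{n} μ^m (ν/μ;q)_m (μ;q)_{n-m} [n choose m]_q = (ν;q)_n, where (a;q)_k denotes the q-Pochhammer symbol and [n choose m]_q = (q;q)_n/((q;q)_m (q;q)_{n-m}) is the q-binomial coefficient. -/

import Mathlib

/-- The q-Pochhammer symbol `(a;q)_n = ∏_{k=0}^{n-1} (1 - a q^k)`. -/
noncomputable def qPoch (a q : ℂ) (n : ℕ) : ℂ := ∏ k ∈ Finset.range n, (1 - a * q ^ k)

lemma qPoch_zero (a q : ℂ) : qPoch a q 0 = 1 := by simp [qPoch]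

lemma qPoch_succ (a q : ℂ) (n : ℕ) :
    qPoch a q (n + 1) = qPoch a q n * (1 - a * q ^ n) := by
  simp [qPoch, Finset.prod_range_succ]

/-- q-Pascal identity for the ratio form of q-binomial coefficients. -/
lemma q_pascal (q : ℂ) (n m : ℕ) (hm : m < n)
    (h1 : qPoch q q (m + 1) ≠ 0) (h2 : qPoch q q m ≠ 0)
    (h3 : qPoch q q (n - m) ≠ 0) (h4 : qPoch q q (n - m - 1) ≠ 0) :
    qPoch q q (n + 1) / (qPoch q q (m + 1) * qPoch q q (n - m)) =
      qPoch q q n / (qPoch q q (m + 1) * qPoch q q (n - m - 1)) +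
        q ^ (n - m) * (qPoch q q n / (qPoch q q m * qPoch q q (n - m))) := by
  obtain ⟨k, rfl⟩ : ∃ k, n = m + 1 + k := ⟨n - m - 1, by omega⟩
  have e1 : m + 1 + k - m = k + 1 := by omega
  have e2 : m + 1 + k - m - 1 = k := by omega
  rw [e1] at h3
  rw [e2] at h4
  rw [e2, e1]
  rw [qPoch_succ q q (m + 1 + k), qPoch_succ q q m, qPoch_succ q q k] at *
  obtain ⟨h2', hA⟩ := mul_ne_zero_iff.mp h1
  obtain ⟨h4', hB⟩ := mul_ne_zero_iff.mp h3
  field_simp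
  ring

/-- summand of the main identity at level `n`. -/
noncomputable def ff (q μ ν : ℂ) (n m : ℕ) : ℂ :=
  μ ^ m * qPoch (ν / μ) q m * qPoch μ q (n - m) *
    (qPoch q q n / (qPoch q q m * qPoch q q (n - m)))

noncomputable def uu (q μ ν : ℂ) (n m : ℕ) : ℂ :=
  μ ^ m * qPoch (ν / μ) q m * qPoch μ q (n + 1 - m) *
    (qPoch q q n / (qPoch q q m * qPoch q q (n - m)))

noncomputable def ww (q μ ν : ℂ) (n m : ℕ) : ℂ :=
  μ ^ (m + 1) * qPoch (ν / μ) q (m + 1) * qPoch μ q (n - m) * q ^ (n - m) *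
    (qPoch q q n / (qPoch q q m * qPoch q q (n - m)))

lemma ff_pascal (q μ ν : ℂ) (n m : ℕ) (hm : m < n)
    (h1 : qPoch q q (m + 1) ≠ 0) (h2 : qPoch q q m ≠ 0)
    (h3 : qPoch q q (n - m) ≠ 0) (h4 : qPoch q q (n - m - 1) ≠ 0) :
    ff q μ ν (n + 1) (m + 1) = uu q μ ν n (m + 1) + ww q μ ν n m := by
  unfold ff uu ww
  have e : n + 1 - (m + 1) = n - m := by omega
  have e2 : n - (m + 1) = n - m - 1 := by omega
  rw [e, e2, q_pascal q n m hm h1 h2 h3 h4]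
  ring

lemma ff_zero (q μ ν : ℂ) (n : ℕ) (h1 : qPoch q q n ≠ 0) (h2 : qPoch q q (n + 1) ≠ 0) :
    ff q μ ν (n + 1) 0 = uu q μ ν n 0 := by
  unfold ff uu
  simp only [Nat.sub_zero, qPoch_zero, one_mul]
  rw [div_self h2, div_self h1]

lemma ff_last (q μ ν : ℂ) (n : ℕ) (h1 : qPoch q q n ≠ 0) (h2 : qPoch q q (n + 1) ≠ 0) :
    ff q μ ν (n + 1) (n + 1) = ww q μ ν n n := by
  unfold ff ww
  simp only [Nat.sub_self, qPoch_zero, mul_one, pow_zero]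
  rw [div_self h2, div_self h1]

lemma uu_add_ww (q μ ν : ℂ) (hμ : μ ≠ 0) (n m : ℕ) (hm : m ≤ n) :
    uu q μ ν n m + ww q μ ν n m = (1 - ν * q ^ n) * ff q μ ν n m := by
  unfold ff uu ww
  obtain ⟨k, rfl⟩ : ∃ k, n = m + k := ⟨n - m, by omega⟩
  have e : m + k - m = k := by omega
  have e2 : m + k + 1 - m = k + 1 := by omega
  rw [e, e2, qPoch_succ μ q k, qPoch_succ (ν / μ) q m]
  generalize qPoch q q (m + k) / (qPoch q q m * qPoch q q k) = b
  field_simp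
  ring

theorem q_binomial_identity (q μ ν : ℂ) (n : ℕ)
    (hq : ‖q‖ < 1) (hμ : μ ≠ 0)
    (hqq : ∀ k ≤ n, qPoch q q k ≠ 0) :
    ∑ m ∈ Finset.range (n + 1),
      μ ^ m * qPoch (ν / μ) q m * qPoch μ q (n - m) *
        (qPoch q q n / (qPoch q q m * qPoch q q (n - m))) = qPoch ν q n := by
  induction n with
  | zero => simp [qPoch]
  | succ n ih =>
    have hqq' : ∀ k ≤ n, qPoch q q k ≠ 0 := fun k hk => hqq k (hk.trans (Nat.le_succ n))
    show (∑ m ∈ Finset.range (n + 1 + 1), ff q μ ν (n + 1) m) = qPoch ν q (n + 1)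
    have ihf : (∑ m ∈ Finset.range (n + 1), ff q μ ν n m) = qPoch ν q n := ih hqq'
    calc (∑ m ∈ Finset.range (n + 1 + 1), ff q μ ν (n + 1) m)
        = (∑ m ∈ Finset.range n, ff q μ ν (n + 1) (m + 1) + ff q μ ν (n + 1) 0)
            + ff q μ ν (n + 1) (n + 1) := by
          rw [Finset.sum_range_succ, Finset.sum_range_succ']
      _ = (∑ m ∈ Finset.range n, (uu q μ ν n (m + 1) + ww q μ ν n m) + uu q μ ν n 0)
            + ww q μ ν n n := by
          rw [ff_zero q μ ν n (hqq' n le_rfl) (hqq (n + 1) le_rfl),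
            ff_last q μ ν n (hqq' n le_rfl) (hqq (n + 1) le_rfl)]
          congr 1
          congr 1
          refine Finset.sum_congr rfl fun m hm => ?_
          simp only [Finset.mem_range] at hm
          exact ff_pascal q μ ν n m hm (hqq _ (by omega)) (hqq _ (by omega))
            (hqq _ (by omega)) (hqq _ (by omega))
      _ = (∑ m ∈ Finset.range n, uu q μ ν n (m + 1) + uu q μ ν n 0)
            + (∑ m ∈ Finset.range n, ww q μ ν n m + ww q μ ν n n) := by
          rw [Finset.sum_add_distrib]; ring
      _ = (∑ m ∈ Finset.range (n + 1), uu q μ ν n m)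
            + (∑ m ∈ Finset.range (n + 1), ww q μ ν n m) := by
          rw [Finset.sum_range_succ' (uu q μ ν n) n, Finset.sum_range_succ (ww q μ ν n) n]
      _ = ∑ m ∈ Finset.range (n + 1), (uu q μ ν n m + ww q μ ν n m) :=
          (Finset.sum_add_distrib).symm
      _ = ∑ m ∈ Finset.range (n + 1), (1 - ν * q ^ n) * ff q μ ν n m := by
          refine Finset.sum_congr rfl fun m hm => ?_
          simp only [Finset.mem_range] at hm
          exact uu_add_ww q μ ν hμ n m (by omega)
      _ = (1 - ν * q ^ n) * ∑ m ∈ Finset.range (n + 1), ff q μ ν n m :=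
          (Finset.mul_sum _ _ _).symm
      _ = qPoch ν q (n + 1) := by rw [ihf, qPoch_succ]; ring
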